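/- Let n ≥ 2 and let k : Fin n → Bool satisfy k(n−1) = false, and set W = number of positions p with k(p) = true. Then the number p_k of unordered pairs {p, q} of distinct positions in Fin n such that P(i ∘ (transposition of p and q), k) = P(i, k) for all binary strings i equals C(W, 2) + C(n − W, 2) (binomial coefficients), and consequently 4·(C(n, 2) − p_k) = 4·W·(n − W). -/

import Mathlib

/-- `F α = ((1+√2)^α − (1−√2)^α)/(2√2)` with integer powers. -/
noncomputable def Ffun (α : ℤ) : ℝ :=
  ((1 + Real.sqrt 2) ^ α - (1 - Real.sqrt 2) ^ α) / (2 * Real.sqrt 2)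

/-- `c'(i,k)`: number of positions `p < n−1` with `i p = k p = true`. -/
def cB (n : ℕ) (i k : Fin n → Bool) : ℕ :=
  (Finset.univ.filter fun p : Fin n => (p : ℕ) < n - 1 ∧ i p = true ∧ k p = true).card

/-- `d'(i,k)`: number of positions `p < n−1` with `i p ≠ k p`. -/
def dB (n : ℕ) (i k : Fin n → Bool) : ℕ :=
  (Finset.univ.filter fun p : Fin n => (p : ℕ) < n - 1 ∧ i p ≠ k p).card

/-- Numerical value (`0` or `1`) of the last bit of `i`. -/
def lastBit (n : ℕ) (i : Fin n → Bool) : ℕ :=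
  (Finset.univ.filter fun p : Fin n => (p : ℕ) = n - 1 ∧ i p = true).card

/-- `P(i,k) = (−1)^{c'(i,k)}·F(d'(i,k) − 1 + a + b)` where `a, b` are the last bits of
`i` and `k`. -/
noncomputable def Pb (n : ℕ) (i k : Fin n → Bool) : ℝ :=
  (-1 : ℝ) ^ cB n i k * Ffun ((dB n i k : ℤ) - 1 + (lastBit n i : ℤ) + (lastBit n k : ℤ))

open Finset

lemma nsub_one_lt_of_two_le (n : ℕ) (hn : 2 ≤ n) : n - 1 < n := by omega

lemma sqrt2_gt : (1:ℝ) < Real.sqrt 2 := by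
  nlinarith [Real.sq_sqrt (by norm_num : (2:ℝ) ≥ 0), Real.sqrt_nonneg 2]

lemma Ffun_neg_one : Ffun (-1) = 1 := by
  have hs : Real.sqrt 2 ^ 2 = 2 := Real.sq_sqrt (by norm_num)
  have hg := sqrt2_gt
  have h1 : (1:ℝ) + Real.sqrt 2 ≠ 0 := by nlinarith
  have h2 : (1:ℝ) - Real.sqrt 2 ≠ 0 := by nlinarith
  have h3 : Real.sqrt 2 ≠ 0 := by nlinarith
  unfold Ffun
  rw [zpow_neg_one, zpow_neg_one]
  field_simp
  nlinarith [hs]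

lemma Ffun_one : Ffun 1 = 1 := by
  have h3 : Real.sqrt 2 ≠ 0 := by nlinarith [sqrt2_gt]
  unfold Ffun
  rw [zpow_one, zpow_one]
  field_simp
  ring


lemma cB_eq (n : ℕ) (hn : 2 ≤ n) (i k : Fin n → Bool)
    (hk : k (⟨n - 1, nsub_one_lt_of_two_le n hn⟩ : Fin n) = false) :
    cB n i k = (univ.filter fun r : Fin n => i r = true ∧ k r = true).card := by
  unfold cB
  congr 1
  apply filter_congr
  intro r _
  constructor
  · rintro ⟨_, h⟩; exact h
  · rintro ⟨hi, hkr⟩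
    refine ⟨?_, hi, hkr⟩
    by_contra h
    have hlt := r.isLt
    have : r = (⟨n - 1, by omega⟩ : Fin n) := Fin.ext (show (r:ℕ) = n - 1 by omega)
    rw [this, hk] at hkr
    simp at hkr

lemma lastBit_false (n : ℕ) (hn : 2 ≤ n) (k : Fin n → Bool)
    (hk : k (⟨n - 1, nsub_one_lt_of_two_le n hn⟩ : Fin n) = false) : lastBit n k = 0 := by
  unfold lastBit
  rw [card_eq_zero, filter_eq_empty_iff]
  rintro r - ⟨hr, hkr⟩
  have : r = (⟨n - 1, by omega⟩ : Fin n) := Fin.ext hr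
  rw [this, hk] at hkr
  simp at hkr

lemma exp_eq (n : ℕ) (hn : 2 ≤ n) (i k : Fin n → Bool)
    (hk : k (⟨n - 1, nsub_one_lt_of_two_le n hn⟩ : Fin n) = false) :
    dB n i k + lastBit n i = (univ.filter fun r : Fin n => i r ≠ k r).card := by
  classical
  have hsplit := Finset.card_filter_add_card_filter_not
    (s := univ.filter fun r : Fin n => i r ≠ k r)
    (p := fun r : Fin n => (r : ℕ) < n - 1)
  rw [Finset.filter_filter, Finset.filter_filter] at hsplit
  have h1 : dB n i k = (univ.filter fun r : Fin n => i r ≠ k r ∧ (r : ℕ) < n - 1).card := by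
    unfold dB; congr 1; apply filter_congr; intro r _; tauto
  have h2 : lastBit n i
      = (univ.filter fun r : Fin n => i r ≠ k r ∧ ¬ (r : ℕ) < n - 1).card := by
    unfold lastBit; congr 1; apply filter_congr
    intro r _
    have hlt := r.isLt
    constructor
    · rintro ⟨hr, hir⟩
      have : r = (⟨n - 1, by omega⟩ : Fin n) := Fin.ext hr
      rw [this, hk] at *
      exact ⟨by rw [hir]; simp, by omega⟩
    · rintro ⟨hne, hge⟩
      have hr : (r : ℕ) = n - 1 := by omega
      have he : r = (⟨n - 1, by omega⟩ : Fin n) := Fin.ext hr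
      rw [he, hk] at hne
      rw [he]
      refine ⟨by simp [hr], by simpa using hne⟩
  rw [h1, h2]
  omega

lemma Pb_eq (n : ℕ) (hn : 2 ≤ n) (i k : Fin n → Bool)
    (hk : k (⟨n - 1, nsub_one_lt_of_two_le n hn⟩ : Fin n) = false) :
    Pb n i k = (-1 : ℝ) ^ (univ.filter fun r : Fin n => i r = true ∧ k r = true).card *
      Ffun (((univ.filter fun r : Fin n => i r ≠ k r).card : ℤ) - 1) := by
  unfold Pb
  rw [cB_eq n hn i k hk, lastBit_false n hn k hk]
  congr 1
  congr 1
  have := exp_eq n hn i k hk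
  push_cast [← this]
  ring

lemma card_swap_eq {n : ℕ} (p q : Fin n) (k : Fin n → Bool)
    (hks : ∀ r, k (Equiv.swap p q r) = k r)
    (Q : Bool → Bool → Prop) [∀ a b, Decidable (Q a b)] (i : Fin n → Bool) :
    (univ.filter fun r : Fin n => Q (i (Equiv.swap p q r)) (k r)).card
      = (univ.filter fun r : Fin n => Q (i r) (k r)).card := by
  apply Finset.card_equiv (Equiv.swap p q)
  intro r
  simp only [mem_filter, mem_univ, true_and]
  rw [hks]

lemma swap_invariant (n : ℕ) (hn : 2 ≤ n) (k : Fin n → Bool)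
    (hk : k (⟨n - 1, nsub_one_lt_of_two_le n hn⟩ : Fin n) = false) (p q : Fin n) (hpq : k p = k q)
    (i : Fin n → Bool) : Pb n (i ∘ Equiv.swap p q) k = Pb n i k := by
  have hks : ∀ r, k (Equiv.swap p q r) = k r := by
    intro r
    rcases eq_or_ne r p with rfl | h1
    · rw [Equiv.swap_apply_left, hpq]
    rcases eq_or_ne r q with rfl | h2
    · rw [Equiv.swap_apply_right, hpq]
    · rw [Equiv.swap_apply_of_ne_of_ne h1 h2]
  rw [Pb_eq n hn _ k hk, Pb_eq n hn i k hk]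
  have hc := card_swap_eq p q k hks (fun a b => a = true ∧ b = true) i
  have hd := card_swap_eq p q k hks (fun a b => a ≠ b) i
  simp only [Function.comp_apply] at *
  rw [hc, hd]

lemma not_invariant_aux (n : ℕ) (hn : 2 ≤ n) (k : Fin n → Bool)
    (hk : k (⟨n - 1, nsub_one_lt_of_two_le n hn⟩ : Fin n) = false) (p q : Fin n)
    (hp : k p = true) (hq : k q = false) :
    Pb n (k ∘ Equiv.swap p q) k ≠ Pb n k k := by
  have hpq : p ≠ q := by intro h; rw [h, hq] at hp; simp at hp
  rw [Pb_eq n hn _ k hk, Pb_eq n hn k k hk]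
  have e0 : (univ.filter fun r : Fin n => k r ≠ k r) = ∅ := by
    rw [filter_eq_empty_iff]; intro r _; simp
  have c0 : p ∈ (univ.filter fun r : Fin n => k r = true ∧ k r = true) := by
    simp [hp]
  have hC : (univ.filter fun r : Fin n =>
      (k ∘ Equiv.swap p q) r = true ∧ k r = true)
      = (univ.filter fun r : Fin n => k r = true ∧ k r = true).erase p := by
    ext r
    simp only [mem_erase, mem_filter, mem_univ, true_and, Function.comp_apply]
    rcases eq_or_ne r p with rfl | h1
    · simp [Equiv.swap_apply_left, hq]
    rcases eq_or_ne r q with rfl | h2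
    · simp [Equiv.swap_apply_right, hq]
    · rw [Equiv.swap_apply_of_ne_of_ne h1 h2]; tauto
  have hD : (univ.filter fun r : Fin n => (k ∘ Equiv.swap p q) r ≠ k r)
      = {p, q} := by
    ext r
    simp only [mem_filter, mem_univ, true_and, Function.comp_apply, mem_insert,
      mem_singleton]
    rcases eq_or_ne r p with rfl | h1
    · simp [Equiv.swap_apply_left, hq, hp]
    rcases eq_or_ne r q with rfl | h2
    · simp [Equiv.swap_apply_right, hq, hp]
    · rw [Equiv.swap_apply_of_ne_of_ne h1 h2]; simp [h1, h2]
  rw [hC, hD, e0, card_erase_of_mem c0,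
    card_insert_of_notMem (by simpa using hpq), card_singleton, card_empty]
  have hc1 : 1 ≤ (univ.filter fun r : Fin n => k r = true ∧ k r = true).card :=
    card_pos.mpr ⟨p, c0⟩
  obtain ⟨m, hm⟩ := Nat.exists_eq_add_of_le hc1
  rw [hm, Nat.add_sub_cancel_left]
  norm_num [Ffun_one, Ffun_neg_one]
  rw [pow_add, pow_one]
  intro h
  have hx : ((-1:ℝ)) ^ m ≠ 0 := pow_ne_zero _ (by norm_num)
  apply hx; linarith


lemma two_mul_choose_two (c : ℕ) : 2 * c.choose 2 = c * (c - 1) := by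
  induction c with
  | zero => simp
  | succ m ih =>
    rw [Nat.choose_succ_succ, Nat.choose_one_right, Nat.mul_add, ih, Nat.add_sub_cancel]
    cases m with
    | zero => simp
    | succ v => simp only [Nat.succ_sub_one]; ring

lemma card_lt_pairs {α : Type*} [LinearOrder α] [DecidableEq α] (T : Finset α) :
    ((T ×ˢ T).filter fun pq => pq.1 < pq.2).card = T.card.choose 2 := by
  classical
  have hsym : ((T ×ˢ T).filter fun pq => pq.1 < pq.2).card
      = ((T ×ˢ T).filter fun pq => pq.2 < pq.1).card := by
    apply Finset.card_equiv (Equiv.prodComm α α)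
    intro pq
    simp [Finset.mem_filter, Finset.mem_product, and_comm, and_assoc]
  have hunion : ((T ×ˢ T).filter fun pq => pq.1 < pq.2)
      ∪ ((T ×ˢ T).filter fun pq => pq.2 < pq.1) = T.offDiag := by
    rw [← Finset.filter_or]
    ext pq
    simp [Finset.mem_offDiag, Finset.mem_filter, Finset.mem_product]
    tauto
  have hdisj : Disjoint ((T ×ˢ T).filter fun pq => pq.1 < pq.2)
      ((T ×ˢ T).filter fun pq => pq.2 < pq.1) := by
    rw [Finset.disjoint_left]
    intro pq h1 h2
    simp only [Finset.mem_filter] at h1 h2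
    exact absurd h1.2 (not_lt_of_gt h2.2)
  have hcard := Finset.card_union_of_disjoint hdisj
  rw [hunion, Finset.offDiag_card, ← hsym] at hcard
  have h2 : 2 * ((T ×ˢ T).filter fun pq => pq.1 < pq.2).card
      = T.card * T.card - T.card := by omega
  have := two_mul_choose_two T.card
  have hm : T.card * (T.card - 1) = T.card * T.card - T.card := by
    cases T.card with
    | zero => simp
    | succ v => simp [Nat.succ_sub_one, Nat.mul_sub, Nat.succ_mul, Nat.mul_succ]
  omega

lemma key_id (W F : ℕ) : (W + F) * (W + F - 1) = W * (W - 1) + F * (F - 1) + 2 * (W * F) := by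
  cases W with
  | zero => simp
  | succ v =>
    cases F with
    | zero => simp
    | succ u =>
      show (v + 1 + (u + 1)) * (v + 1 + (u + 1) - 1) = _
      have h1 : v + 1 + (u + 1) - 1 = v + u + 1 := by omega
      have h2 : v + 1 - 1 = v := rfl
      have h3 : u + 1 - 1 = u := rfl
      rw [h1, h2, h3]
      ring

/-- The number `p_k` of unordered pairs of distinct positions whose swap preserves the
`k`-th eigenvector equals `C(W,2) + C(n−W,2)`, whence `4(C(n,2) − p_k) = 4W(n−W)`. -/
theorem stmt17 (n : ℕ) (hn : 2 ≤ n) (k : Fin n → Bool)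
    (hk : k (⟨n - 1, by omega⟩ : Fin n) = false) :
    {pq : Fin n × Fin n | pq.1 < pq.2 ∧
        ∀ i : Fin n → Bool, Pb n (i ∘ Equiv.swap pq.1 pq.2) k = Pb n i k}.ncard =
      Nat.choose ((Finset.univ.filter fun p : Fin n => k p = true).card) 2 +
        Nat.choose (n - (Finset.univ.filter fun p : Fin n => k p = true).card) 2 ∧
    4 * (Nat.choose n 2 -
        {pq : Fin n × Fin n | pq.1 < pq.2 ∧
          ∀ i : Fin n → Bool, Pb n (i ∘ Equiv.swap pq.1 pq.2) k = Pb n i k}.ncard) =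
      4 * ((Finset.univ.filter fun p : Fin n => k p = true).card) *
        (n - (Finset.univ.filter fun p : Fin n => k p = true).card) := by
  classical
  set T : Finset (Fin n) := univ.filter fun r : Fin n => k r = true with hT
  set T' : Finset (Fin n) := univ.filter fun r : Fin n => k r = false with hT'
  have hset : {pq : Fin n × Fin n | pq.1 < pq.2 ∧
        ∀ i : Fin n → Bool, Pb n (i ∘ Equiv.swap pq.1 pq.2) k = Pb n i k}
      = ↑((univ ×ˢ univ).filter fun pq : Fin n × Fin n =>
          pq.1 < pq.2 ∧ k pq.1 = k pq.2) := by
    ext pq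
    simp only [Set.mem_setOf_eq, coe_filter, mem_product, mem_univ, and_self, true_and]
    constructor
    · rintro ⟨hlt, hinv⟩
      refine ⟨hlt, ?_⟩
      by_contra hne
      cases hp : k pq.1 <;> cases hq : k pq.2 <;> rw [hp, hq] at hne <;> try simp at hne
      · exact not_invariant_aux n hn k hk pq.2 pq.1 hq hp
          (by rw [Equiv.swap_comm]; exact hinv k)
      · exact not_invariant_aux n hn k hk pq.1 pq.2 hp hq (hinv k)
    · rintro ⟨hlt, heq⟩
      exact ⟨hlt, swap_invariant n hn k hk pq.1 pq.2 heq⟩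
  have hsplit : ((univ ×ˢ univ).filter fun pq : Fin n × Fin n =>
        pq.1 < pq.2 ∧ k pq.1 = k pq.2)
      = ((T ×ˢ T).filter fun pq => pq.1 < pq.2)
        ∪ ((T' ×ˢ T').filter fun pq => pq.1 < pq.2) := by
    ext pq
    simp only [mem_filter, mem_product, mem_univ, and_self, true_and, mem_union, hT, hT']
    cases hp : k pq.1 <;> cases hq : k pq.2 <;> simp [hp, hq]
  have hdisj : Disjoint ((T ×ˢ T).filter fun pq : Fin n × Fin n => pq.1 < pq.2)
      ((T' ×ˢ T').filter fun pq => pq.1 < pq.2) := by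
    rw [disjoint_left]
    intro pq h1 h2
    simp only [mem_filter, mem_product, hT, hT', mem_univ, true_and] at h1 h2
    have := h1.1.1
    have := h2.1.1
    rw [h1.1.1] at h2
    simp at h2
  have hTT' : T.card + T'.card = n := by
    have := Finset.card_filter_add_card_filter_not
      (s := (univ : Finset (Fin n))) (p := fun r => k r = true)
    rw [Finset.card_univ, Fintype.card_fin] at this
    have he : T' = univ.filter fun r : Fin n => ¬ k r = true := by
      apply filter_congr; intro r _; simp
    rw [hT, he]
    exact this
  have hWn : T.card ≤ n := by omega
  have hcount : {pq : Fin n × Fin n | pq.1 < pq.2 ∧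
        ∀ i : Fin n → Bool, Pb n (i ∘ Equiv.swap pq.1 pq.2) k = Pb n i k}.ncard
      = T.card.choose 2 + (n - T.card).choose 2 := by
    rw [hset, Set.ncard_coe_finset, hsplit, card_union_of_disjoint hdisj,
      card_lt_pairs, card_lt_pairs]
    congr 2
    omega
  refine ⟨hcount, ?_⟩
  rw [hcount]
  have h2A := two_mul_choose_two n
  have h2B := two_mul_choose_two T.card
  have h2C := two_mul_choose_two (n - T.card)
  have hid := key_id T.card (n - T.card)
  rw [show T.card + (n - T.card) = n by omega] at hid
  have hkey : 2 * n.choose 2 = 2 * T.card.choose 2 + 2 * (n - T.card).choose 2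
      + 2 * (T.card * (n - T.card)) := by rw [h2A, h2B, h2C]; exact hid
  rw [mul_assoc]
  generalize T.card * (n - T.card) = x at hkey ⊢
  omega
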